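/- arXiv:1903.10724 — 2 statements merged into one kernel-verified Lean document; each statement's English description precedes it below -/
import Mathlib

section
/- Let X be a set with ternary operation [ ] satisfying LN and RN, and let p, k ≥ 0. Let Cₙ^{(p,k),D} ⊆ Cₙ = R⟨X^{n+2}⟩ be the submodule generated by (n+2)-tuples (x₀,…,xₙ₊₁) for which there exists an index i with p ≤ i, i+2 ≤ n+1−k, and xᵢ₊₁ = [xᵢ xᵢ₊₁ xᵢ₊₂] (taking Cₙ^{(p,k),D} = 0 if n−p−k < 1). Then the truncated left differential ∂ₙ^{(p,k),L} = Σ_{i=p}^{n−k} (−1)ⁱ dᵢⁿ'ᴸ maps Cₙ^{(p,k),D} into Cₙ₋₁^{(p,k),D}. -/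
universe u
variable {X : Type u}
open Fin.NatCast

/-- Substitution: replace the `i`-th entry `xᵢ` of the tuple by `[xᵢ₋₁ xᵢ xᵢ₊₁]`. -/
def subst (t : X → X → X → X) (n i : ℕ) (x : Fin (n + 2) → X) : Fin (n + 2) → X :=
  Function.update x (i : Fin (n + 2))
    (t (x ((i : Fin (n + 2)) - 1)) (x (i : Fin (n + 2))) (x ((i : Fin (n + 2)) + 1)))

/-- Left face maps `dᵢⁿ'ᴸ` on tuples. -/
def dL (t : X → X → X → X) (n : ℕ) : ℕ → (Fin (n + 2) → X) → (Fin (n + 1) → X)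
  | 0, x => fun j => x j.succ
  | i + 1, x => dL t n i (subst t n (i + 1) x)

/-- Auxiliary for right face maps: `dRa t n m = d_{n-m}ⁿ'ᴿ`. -/
def dRa (t : X → X → X → X) (n : ℕ) : ℕ → (Fin (n + 2) → X) → (Fin (n + 1) → X)
  | 0, x => fun j => x j.castSucc
  | m + 1, x => dRa t n m (subst t n (n - m) x)

/-- Right face maps `dᵢⁿ'ᴿ` on tuples. -/
def dR (t : X → X → X → X) (n i : ℕ) : (Fin (n + 2) → X) → (Fin (n + 1) → X) :=
  dRa t n (n - i)

/-- Left face maps on the free module `Cₙ = R⟨X^{n+2}⟩`. -/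
noncomputable def dLhat (R : Type*) [CommRing R] (t : X → X → X → X) (n i : ℕ) :
    ((Fin (n + 2) → X) →₀ R) →ₗ[R] ((Fin (n + 1) → X) →₀ R) :=
  Finsupp.lmapDomain R R (dL t n i)

/-- Right face maps on the free module `Cₙ = R⟨X^{n+2}⟩`. -/
noncomputable def dRhat (R : Type*) [CommRing R] (t : X → X → X → X) (n i : ℕ) :
    ((Fin (n + 2) → X) →₀ R) →ₗ[R] ((Fin (n + 1) → X) →₀ R) :=
  Finsupp.lmapDomain R R (dR t n i)

/-- The `(p,k)`-degenerate submodule `Cₙ^{(p,k),D}`: spanned by tuples with a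
degenerate consecutive triple at positions `i, i+1, i+2` for some `p ≤ i`
with `i + 2 ≤ n + 1 − k`. -/
noncomputable def Cdeg (R : Type*) [CommRing R] (t : X → X → X → X) (p k n : ℕ) :
    Submodule R ((Fin (n + 2) → X) →₀ R) :=
  Submodule.span R {f | ∃ x : Fin (n + 2) → X, ∃ i : ℕ, p ≤ i ∧ i + 2 + k ≤ n + 1 ∧
    x (↑(i + 1)) = t (x ↑i) (x ↑(i + 1)) (x ↑(i + 2)) ∧ f = Finsupp.single x 1}

section helpers
variable (t : X → X → X → X)

lemma natCast_fin_ne {n a b : ℕ} (ha : a < n + 2) (hb : b < n + 2) (h : a ≠ b) :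
    (↑a : Fin (n + 2)) ≠ ↑b := by
  intro hab
  apply h
  have := congrArg Fin.val hab
  rwa [Fin.val_cast_of_lt ha, Fin.val_cast_of_lt hb] at this

lemma fin_cast_sub_one {n j : ℕ} : (↑(j + 1) : Fin (n + 2)) - 1 = ↑j := by
  push_cast; exact add_sub_cancel_right _ _

lemma fin_cast_add_one {n j : ℕ} : (↑(j + 1) : Fin (n + 2)) + 1 = ↑(j + 2) := by
  push_cast; rw [add_assoc, one_add_one_eq_two]

lemma dL_succ (n j : ℕ) (x : Fin (n + 2) → X) :
    dL t n (j + 1) x = dL t n j (subst t n (j + 1) x) := rfl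

lemma dL_apply_ge (n j m : ℕ) (x : Fin (n + 2) → X) (hjm : j ≤ m) (hm : m < n + 1) :
    dL t n j x ↑m = x ↑(m + 1) := by
  induction j generalizing x with
  | zero =>
    show x (↑m : Fin (n + 1)).succ = _
    congr 1
    apply Fin.ext
    rw [Fin.val_succ, Fin.val_cast_of_lt hm, Fin.val_cast_of_lt (by omega)]
  | succ j ih =>
    rw [dL_succ, ih _ (by omega), subst,
      Function.update_of_ne (natCast_fin_ne (by omega) (by omega) (by omega)) _ _]

lemma dL_apply_self (n j : ℕ) (x : Fin (n + 2) → X) (hj : j < n + 1) :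
    dL t n (j + 1) x ↑j = t (x ↑j) (x ↑(j + 1)) (x ↑(j + 2)) := by
  rw [dL_succ, dL_apply_ge t n j j _ le_rfl hj, subst, Function.update_self,
    fin_cast_sub_one, fin_cast_add_one]

lemma subst_eq_self (n i : ℕ) (x : Fin (n + 2) → X)
    (hdeg : x ↑(i + 1) = t (x ↑i) (x ↑(i + 1)) (x ↑(i + 2))) :
    subst t n (i + 1) x = x := by
  unfold subst
  rw [fin_cast_sub_one, fin_cast_add_one, ← hdeg, Function.update_eq_self]

lemma dL_cancel (n i : ℕ) (x : Fin (n + 2) → X)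
    (hdeg : x ↑(i + 1) = t (x ↑i) (x ↑(i + 1)) (x ↑(i + 2))) :
    dL t n (i + 1) x = dL t n i x := by
  rw [dL_succ, subst_eq_self t n i x hdeg]

lemma dL_deg (n i d : ℕ) (x : Fin (n + 3) → X)
    (hRN : ∀ a b c z, t (t a b c) c z = t (t a b (t b c z)) (t b c z) z)
    (hbound : i + 2 + d ≤ n + 1)
    (hdeg : x ↑(i + 1) = t (x ↑i) (x ↑(i + 1)) (x ↑(i + 2))) :
    dL t (n + 1) (i + 2 + d) x ↑(i + 1) =
      t (dL t (n + 1) (i + 2 + d) x ↑i) (dL t (n + 1) (i + 2 + d) x ↑(i + 1))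
        (dL t (n + 1) (i + 2 + d) x ↑(i + 2)) := by
  induction d generalizing x with
  | zero =>
    have hA : dL t (n + 1) (i + 2) x ↑(i + 2) = x ↑(i + 3) :=
      dL_apply_ge t (n + 1) (i + 2) (i + 2) x le_rfl (by omega)
    have hB : dL t (n + 1) (i + 2) x ↑(i + 1) = t (x ↑(i + 1)) (x ↑(i + 2)) (x ↑(i + 3)) :=
      dL_apply_self t (n + 1) (i + 1) x (by omega)
    have hC : dL t (n + 1) (i + 2) x ↑i
        = t (x ↑i) (x ↑(i + 1)) (t (x ↑(i + 1)) (x ↑(i + 2)) (x ↑(i + 3))) := by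
      rw [show i + 2 = (i + 1) + 1 from rfl, dL_succ]
      have h := dL_apply_self t (n + 1) i (subst t (n + 1) (i + 2) x) (by omega)
      rw [h]
      rw [subst, Function.update_of_ne (natCast_fin_ne (by omega) (by omega) (by omega)),
        Function.update_of_ne (natCast_fin_ne (by omega) (by omega) (by omega)),
        Function.update_self, fin_cast_sub_one, fin_cast_add_one]
    rw [hA, hB, hC, ← hRN, ← hdeg]
  | succ d ih =>
    rw [show i + 2 + (d + 1) = (i + 2 + d) + 1 from rfl, dL_succ]
    have hx' : ∀ m : ℕ, m ≤ i + 2 → subst t (n + 1) (i + 2 + d + 1) x ↑m = x ↑m := by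
      intro m hm
      rw [subst, Function.update_of_ne (natCast_fin_ne (by omega) (by omega) (by omega)).symm]
    apply ih (subst t (n + 1) (i + 2 + d + 1) x) (by omega)
    rw [hx' i (by omega), hx' (i + 1) (by omega), hx' (i + 2) (by omega)]
    exact hdeg

end helpers

/-- If the ternary operation satisfies LN and RN, the truncated
left differential `∂ₙ^{(p,k),L} = Σ_{i=p}^{n−k} (−1)ⁱ dᵢⁿ'ᴸ` maps the
degenerate submodule `Cₙ^{(p,k),D}` into `Cₙ₋₁^{(p,k),D}`. -/
theorem stmt10 (R : Type*) [CommRing R] (t : X → X → X → X)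
    (hLN : ∀ a b c d, t a b (t b c d) = t a (t a b c) (t (t a b c) c d))
    (hRN : ∀ a b c d, t (t a b c) c d = t (t a b (t b c d)) (t b c d) d)
    (p k : ℕ) :
    ∀ n : ℕ,
      (Cdeg R t p k (n + 1)).map
          (∑ i ∈ Finset.Icc p (n + 1),
            if i + k ≤ n + 1 then ((-1 : R) ^ i) • dLhat R t (n + 1) i else 0)
        ≤ Cdeg R t p k n := by
  intro n
  rw [Submodule.map_le_iff_le_comap, Cdeg, Submodule.span_le]
  rintro f ⟨x, i, hpi, hik, hdeg, rfl⟩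
  simp only [SetLike.mem_coe, Submodule.mem_comap, LinearMap.sum_apply]
  have key : ∀ j : ℕ,
      (if j + k ≤ n + 1 then ((-1 : R) ^ j) • dLhat R t (n + 1) j else 0)
          (Finsupp.single x 1)
        = if j + k ≤ n + 1 then ((-1 : R) ^ j) • Finsupp.single (dL t (n + 1) j x) (1 : R)
          else 0 := by
    intro j
    split
    · simp [dLhat, Finsupp.mapDomain_single]
    · simp
  rw [Finset.sum_congr rfl fun j _ => key j]
  set g : ℕ → (Fin (n + 1 + 1) → X) →₀ R := fun j =>
    if j + k ≤ n + 1 then ((-1 : R) ^ j) • Finsupp.single (dL t (n + 1) j x) (1 : R) else 0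
    with hg
  have hik' : i + 2 + k ≤ n + 2 := hik
  have hi_mem : i ∈ Finset.Icc p (n + 1) := Finset.mem_Icc.2 ⟨hpi, by omega⟩
  have hi1_mem : i + 1 ∈ (Finset.Icc p (n + 1)).erase i :=
    Finset.mem_erase.2 ⟨by omega, Finset.mem_Icc.2 ⟨by omega, by omega⟩⟩
  rw [← Finset.sum_erase_add _ g hi_mem, ← Finset.sum_erase_add _ g hi1_mem,
    add_assoc (∑ y ∈ ((Finset.Icc p (n + 1)).erase i).erase (i + 1), g y) (g (i + 1)) (g i)]
  have hcancel : g (i + 1) + g i = 0 := by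
    rw [hg]
    simp only [if_pos (show i + 1 + k ≤ n + 1 by omega), if_pos (show i + k ≤ n + 1 by omega)]
    rw [dL_cancel t (n + 1) i x hdeg, pow_succ, mul_neg_one, neg_smul, neg_add_cancel]
  rw [hcancel, add_zero]
  apply Submodule.sum_mem
  intro j hj
  obtain ⟨hj1, hj2, hj3⟩ : j ≠ i + 1 ∧ j ≠ i ∧ (p ≤ j ∧ j ≤ n + 1) := by
    rw [Finset.mem_erase, Finset.mem_erase, Finset.mem_Icc] at hj
    tauto
  simp only [hg]
  split
  case isFalse => exact Submodule.zero_mem _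
  case isTrue hjk =>
  apply Submodule.smul_mem
  apply Submodule.subset_span
  rcases lt_or_gt_of_ne hj2 with hlt | hgt
  · -- j < i : degenerate at i - 1
    obtain ⟨m, rfl⟩ : ∃ m, i = m + 1 := ⟨i - 1, by omega⟩
    refine ⟨dL t (n + 1) j x, m, by omega, by omega, ?_, rfl⟩
    rw [dL_apply_ge t (n + 1) j m x (by omega) (by omega),
      dL_apply_ge t (n + 1) j (m + 1) x (by omega) (by omega),
      dL_apply_ge t (n + 1) j (m + 2) x (by omega) (by omega)]
    exact hdeg
  · -- j ≥ i + 2 : degenerate at i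
    obtain ⟨d, rfl⟩ : ∃ d, j = i + 2 + d := ⟨j - (i + 2), by omega⟩
    exact ⟨dL t (n + 1) (i + 2 + d) x, i, hpi, by omega,
      dL_deg t n i d x hRN (by omega) hdeg, rfl⟩
end

section
/- Let X be a set with ternary operation [ ] satisfying LN and RN, and suppose (x₀,…,xₙ₊₁) contains a degenerate triple at positions j, j+1, j+2 (i.e., xⱼ₊₁ = [xⱼ xⱼ₊₁ xⱼ₊₂]). Then d_{j+1}ⁿ'ᴸ(x₀,…,xₙ₊₁) = d_jⁿ'ᴸ(x₀,…,xₙ₊₁), i.e., consecutive left face maps agree on tuples degenerate at the corresponding position. -/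
universe u
variable {X : Type u}
open Fin.NatCast

/-- If the ternary operation satisfies LN and RN and the tuple
`(x₀,…,xₙ₊₁)` has a degenerate triple at positions `j, j+1, j+2`
(`xⱼ₊₁ = [xⱼ xⱼ₊₁ xⱼ₊₂]`), then the consecutive left face maps agree:
`d_{j+1}ⁿ'ᴸ x = d_jⁿ'ᴸ x`. -/
theorem stmt13 (t : X → X → X → X)
    (hLN : ∀ a b c d, t a b (t b c d) = t a (t a b c) (t (t a b c) c d))
    (hRN : ∀ a b c d, t (t a b c) c d = t (t a b (t b c d)) (t b c d) d) :
    ∀ (n j : ℕ) (x : Fin (n + 2) → X), j + 1 ≤ n →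
      x (↑(j + 1)) = t (x ↑j) (x ↑(j + 1)) (x ↑(j + 2)) →
      dL t n (j + 1) x = dL t n j x := by
  intro n j x hj hdeg
  have h1 : ((↑(j + 1) : Fin (n + 2)) - 1) = (↑j : Fin (n + 2)) := by
    have : ((↑(j + 1) : Fin (n + 2))) = ↑j + 1 := by push_cast; ring
    rw [this]; open Fin.CommRing in ring
  have h2 : ((↑(j + 1) : Fin (n + 2)) + 1) = (↑(j + 2) : Fin (n + 2)) := by
    push_cast; open Fin.CommRing in ring
  show dL t n j (subst t n (j + 1) x) = dL t n j x
  congr 1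
  unfold subst
  rw [h1, h2, ← hdeg, Function.update_eq_self]
end
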